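/- Let (n, ⟨·,·⟩, φ) be of modified H-type and let {e_1, …, e_m} be a pseudo-orthonormal basis of v with ⟨e_i, e_i⟩ = ε_i = ±1, where m = dim v. Then for all z, z' in the center z: Σ_{i=1}^{m} ε_i·⟨j(z)e_i, j(z')e_i⟩ = m·B_φ(z, z'). (Equivalently, the Ricci curvature on z, Ric(z,z') = ¼ Σ_i ε_i ⟨j(z)e_i, j(z')e_i⟩, equals (m/4)·B_φ(z,z').) -/

import Mathlib

theorem modified_H_type_ricci_on_z
    {n : Type*} [LieRing n] [LieAlgebra ℝ n] [FiniteDimensional ℝ n]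
    (B : LinearMap.BilinForm ℝ n)
    (hBsymm : ∀ a b : n, B a b = B b a)
    (hBnd : B.Nondegenerate)
    (Z : Submodule ℝ n)
    (hZ : Z = LieSubmodule.toSubmodule (LieAlgebra.center ℝ n))
    (h2step : ∀ a b : n, ⁅a, b⁆ ∈ Z)
    (V : Submodule ℝ n)
    (hV : V = B.orthogonal Z)
    (hZnd : (B.restrict Z).Nondegenerate)
    (hVnd : (B.restrict V).Nondegenerate)
    (j : Z →ₗ[ℝ] V →ₗ[ℝ] V)
    (hj : ∀ (z : Z) (x y : V), B ⁅(x : n), (y : n)⁆ (z : n) = B (y : n) ((j z x : V) : n))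
    (φ : QuadraticForm ℝ Z)
    (hH : ∀ z : Z, (j z) ∘ₗ (j z) = (-(φ z)) • (LinearMap.id : V →ₗ[ℝ] V))
    (m : ℕ) (hm : m = Module.finrank ℝ V)
    (eb : Module.Basis (Fin m) ℝ V) (ε : Fin m → ℝ)
    (hε : ∀ i, ε i = 1 ∨ ε i = -1)
    (horth : ∀ i l, B ((eb i : V) : n) ((eb l : V) : n) = if i = l then ε i else 0) :
    ∀ z z' : Z,
      ∑ i, ε i * B ((j z (eb i) : V) : n) ((j z' (eb i) : V) : n) =
        (m : ℝ) * ((φ (z + z') - φ z - φ z') / 2) := by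
  have skew : ∀ (z : Z) (x y : V),
      B (y : n) ((j z x : V) : n) = - B (x : n) ((j z y : V) : n) := by
    intro z x y
    rw [← hj z x y, ← hj z y x, ← lie_skew ((y : n)) ((x : n)), map_neg,
      LinearMap.neg_apply, neg_neg]
  have epsq : ∀ i, ε i * ε i = 1 := by
    intro i; rcases hε i with h | h <;> rw [h] <;> norm_num
  intro z z'
  obtain ⟨c, hc⟩ : ∃ c : ℝ, c = φ z + φ z' - φ (z + z') := ⟨_, rfl⟩
  have hanti : ∀ x : V, j z (j z' x) + j z' (j z x) = c • x := by
    intro x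
    have h := LinearMap.congr_fun (hH (z + z')) x
    have hzx := LinearMap.congr_fun (hH z) x
    have hz'x := LinearMap.congr_fun (hH z') x
    simp only [map_add, LinearMap.comp_apply, LinearMap.add_apply,
      LinearMap.smul_apply, LinearMap.id_apply] at h hzx hz'x
    have : j z (j z' x) + j z' (j z x)
        = (-(φ (z + z'))) • x - (-(φ z)) • x - (-(φ z')) • x := by
      rw [← h, ← hzx, ← hz'x]; abel
    rw [this, hc]
    module
  have per : ∀ i : Fin m,
      ε i * B ((j z (eb i) : V) : n) ((j z' (eb i) : V) : n) = -c / 2 := by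
    intro i
    have h1 : B ((j z (eb i) : V) : n) ((j z' (eb i) : V) : n)
        = - B ((eb i : V) : n) ((j z' (j z (eb i)) : V) : n) :=
      skew z' (eb i) (j z (eb i))
    have h2 : B ((j z' (eb i) : V) : n) ((j z (eb i) : V) : n)
        = - B ((eb i : V) : n) ((j z (j z' (eb i)) : V) : n) :=
      skew z (eb i) (j z' (eb i))
    have hsum : B ((eb i : V) : n) ((j z (j z' (eb i)) : V) : n)
        + B ((eb i : V) : n) ((j z' (j z (eb i)) : V) : n) = c * ε i := by
      have := hanti (eb i)
      have hcoe : ((j z (j z' (eb i)) : V) : n) + ((j z' (j z (eb i)) : V) : n)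
          = c • ((eb i : V) : n) := by
        rw [← Submodule.coe_add, this, Submodule.coe_smul]
      calc B ((eb i : V) : n) ((j z (j z' (eb i)) : V) : n)
            + B ((eb i : V) : n) ((j z' (j z (eb i)) : V) : n)
          = B ((eb i : V) : n) (((j z (j z' (eb i)) : V) : n)
              + ((j z' (j z (eb i)) : V) : n)) := by rw [map_add]
        _ = B ((eb i : V) : n) (c • ((eb i : V) : n)) := by rw [hcoe]
        _ = c * B ((eb i : V) : n) ((eb i : V) : n) := by
              rw [map_smul]; rfl
        _ = c * ε i := by rw [horth i i, if_pos rfl]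
    have hsymm : B ((j z' (eb i) : V) : n) ((j z (eb i) : V) : n)
        = B ((j z (eb i) : V) : n) ((j z' (eb i) : V) : n) := hBsymm _ _
    have h2B : 2 * B ((j z (eb i) : V) : n) ((j z' (eb i) : V) : n)
        = -(c * ε i) := by
      linarith [h1, h2, hsum, hsymm]
    have hB : B ((j z (eb i) : V) : n) ((j z' (eb i) : V) : n) = -(c * ε i) / 2 := by
      linarith
    have : ε i * (-(c * ε i) / 2) = -c / 2 * (ε i * ε i) := by ring
    rw [hB, this, epsq i, mul_one]
  calc ∑ i, ε i * B ((j z (eb i) : V) : n) ((j z' (eb i) : V) : n)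
      = ∑ _i : Fin m, (-c / 2) := Finset.sum_congr rfl fun i _ => per i
    _ = (m : ℝ) * (-c / 2) := by rw [Finset.sum_const, Finset.card_univ,
          Fintype.card_fin, nsmul_eq_mul]
    _ = (m : ℝ) * ((φ (z + z') - φ z - φ z') / 2) := by rw [hc]; ring
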